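/- There exists a function C : ℕ → ℕ such that the following holds for all k: for every N, a, b ∈ ℕ, every pair of maps A, B : [N] → ℝ^{a×b}, and every function g : ℕ → {0,1} that is constant on inputs ≥ k, the boolean matrix P ∈ {0,1}^{N×N} defined by P(x,y) = g(rank(A(x) + B(y))) satisfies signrank(P) ≤ C(k). (Rank problems of order k have sign-rank bounded by a function of k alone, independent of the matrix size N.) -/

import Mathlib

open Matrix

/-- The sign-rank of a boolean matrix: the minimum rank of a real matrix that is
positive on the 1-entries and negative on the 0-entries. -/
noncomputable def signrank {I J : Type*} [Fintype J] (M : Matrix I J Bool) : ℕ :=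
  sInf {r : ℕ | ∃ A : Matrix I J ℝ, A.rank = r ∧
    ∀ i j, (M i j = true → 0 < A i j) ∧ (M i j = false → A i j < 0)}

namespace SRAux

open MvPolynomial

noncomputable section

lemma one_sub_mul {a n k : ℕ} (e : Fin k → Fin a) (M : Matrix (Fin a) (Fin n) ℝ) :
    (1 : Matrix (Fin a) (Fin a) ℝ).submatrix e id * M = M.submatrix e id := by
  ext i j
  rw [Matrix.mul_apply]
  simp [Matrix.one_apply]

lemma mul_one_sub {a n k : ℕ} (e : Fin k → Fin a) (M : Matrix (Fin n) (Fin a) ℝ) :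
    M * (1 : Matrix (Fin a) (Fin a) ℝ).submatrix id e = M.submatrix id e := by
  ext i j
  rw [Matrix.mul_apply]
  simp [Matrix.one_apply]

lemma rank_submatrix_le' {a b k l : ℕ} (M : Matrix (Fin a) (Fin b) ℝ)
    (f : Fin k → Fin a) (g : Fin l → Fin b) :
    (M.submatrix f g).rank ≤ M.rank := by
  have h : M.submatrix f g =
      (1 : Matrix (Fin a) (Fin a) ℝ).submatrix f id * M *
        (1 : Matrix (Fin b) (Fin b) ℝ).submatrix id g := by
    rw [one_sub_mul, mul_one_sub]
    rfl
  rw [h]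
  exact le_trans (Matrix.rank_mul_le_left _ _) (Matrix.rank_mul_le_right _ _)

/-- a nonzero r×r minor gives a rank lower bound -/
lemma rank_ge_of_minor {a b r : ℕ} (M : Matrix (Fin a) (Fin b) ℝ)
    (f : Fin r → Fin a) (g : Fin r → Fin b) (h : (M.submatrix f g).det ≠ 0) :
    r ≤ M.rank := by
  have hu : IsUnit (M.submatrix f g) := by
    rw [Matrix.isUnit_iff_isUnit_det]
    exact isUnit_iff_ne_zero.2 h
  have h2 := Matrix.rank_of_isUnit _ hu
  calc r = (M.submatrix f g).rank := by rw [h2, Fintype.card_fin]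
    _ ≤ M.rank := rank_submatrix_le' M f g

/-- from a rank lower bound, select linearly independent columns -/
lemma exists_cols {a b r : ℕ} (M : Matrix (Fin a) (Fin b) ℝ) (h : r ≤ M.rank) :
    ∃ c : Fin r → Fin b, LinearIndependent ℝ fun i => Mᵀ (c i) := by
  classical
  obtain ⟨s, hsub, hspan, hli⟩ := exists_linearIndependent ℝ (Set.range Mᵀ)
  have hsfin : s.Finite := (Set.finite_range Mᵀ).subset hsub
  haveI := hsfin.fintype
  have hcard : M.rank = s.toFinset.card := by
    rw [Matrix.rank_eq_finrank_span_cols, Matrix.col, ← hspan, finrank_span_set_eq_card hli]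
  have hr : r ≤ Fintype.card s := by
    rw [← Set.toFinset_card]
    omega
  obtain ⟨e⟩ : Nonempty (Fin r ↪ s) :=
    Function.Embedding.nonempty_of_card_le (by simpa using hr)
  have hli2 : LinearIndependent ℝ fun i : Fin r => ((e i : Fin a → ℝ)) :=
    hli.comp e e.injective
  refine ⟨fun i => (hsub (e i).2).choose, ?_⟩
  have hc : ∀ i, Mᵀ ((hsub (e i).2).choose) = (e i : Fin a → ℝ) := fun i =>
    (hsub (e i).2).choose_spec
  simpa only [hc] using hli2

/-- a matrix of rank at least r has a nonzero r×r minor -/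
lemma exists_minor {a b r : ℕ} (M : Matrix (Fin a) (Fin b) ℝ) (h : r ≤ M.rank) :
    ∃ (f : Fin r → Fin a) (g : Fin r → Fin b), (M.submatrix f g).det ≠ 0 := by
  obtain ⟨c, hc⟩ := exists_cols M h
  have h1 : (M.submatrix id c).rank = r := by
    rw [Matrix.rank_eq_finrank_span_cols]
    have he : (M.submatrix id c)ᵀ = fun i => Mᵀ (c i) := by
      ext i j; rfl
    rw [Matrix.col, he, finrank_span_eq_card hc, Fintype.card_fin]
  have h2 : r ≤ ((M.submatrix id c)ᵀ).rank := by
    rw [Matrix.rank_transpose, h1]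
  obtain ⟨d, hd⟩ := exists_cols _ h2
  have hN : IsUnit (((M.submatrix id c)ᵀ).submatrix id d) := by
    rw [← Matrix.linearIndependent_cols_iff_isUnit]
    have he : (((M.submatrix id c)ᵀ).submatrix id d)ᵀ
        = fun i => ((M.submatrix id c)ᵀ)ᵀ (d i) := by
      ext i j; rfl
    rw [Matrix.col, he]
    convert hd using 2
  refine ⟨d, c, ?_⟩
  have hNe : ((M.submatrix id c)ᵀ).submatrix id d = (M.submatrix d c)ᵀ := by
    ext i j; rfl
  rw [hNe] at hN
  rw [Matrix.isUnit_iff_isUnit_det, Matrix.det_transpose] at hN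
  exact hN.ne_zero

lemma rank_add_le {m n : Type*} [Fintype n] [Fintype m] (A B : Matrix m n ℝ) :
    (A + B).rank ≤ A.rank + B.rank := by
  classical
  rw [Matrix.rank, Matrix.rank, Matrix.rank, Matrix.mulVecLin_add]
  have h : LinearMap.range (A.mulVecLin + B.mulVecLin) ≤
      LinearMap.range A.mulVecLin ⊔ LinearMap.range B.mulVecLin := by
    rintro x ⟨v, rfl⟩
    exact Submodule.mem_sup.2 ⟨A.mulVecLin v, ⟨v, rfl⟩, B.mulVecLin v, ⟨v, rfl⟩,
      rfl⟩
  refine le_trans (Submodule.finrank_mono h) ?_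
  have := Submodule.finrank_sup_add_finrank_inf_eq
    (LinearMap.range A.mulVecLin) (LinearMap.range B.mulVecLin)
  omega

lemma rank_sum_le {m n : Type*} [Fintype n] [Fintype m] {ι : Type*} (s : Finset ι)
    (f : ι → Matrix m n ℝ) :
    (∑ i ∈ s, f i).rank ≤ ∑ i ∈ s, (f i).rank := by
  classical
  induction s using Finset.induction_on with
  | empty => simp [Matrix.rank_zero]
  | insert x s hx ih =>
      rw [Finset.sum_insert hx, Finset.sum_insert hx]
      exact le_trans (rank_add_le _ _) (by omega)

lemma rank_vecMulVec_le {m n : Type*} [Fintype n] [Fintype m]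
    (w : m → ℝ) (v : n → ℝ) : (Matrix.vecMulVec w v).rank ≤ 1 := by
  rw [Matrix.vecMulVec_eq (Fin 1)]
  refine le_trans (Matrix.rank_mul_le_left _ _) ?_
  exact le_trans (Matrix.rank_le_card_width (Matrix.replicateCol (Fin 1) w)) (by simp)

/-- Key rank lemma: a matrix whose entries are a fixed polynomial evaluated at
row-data and column-data has rank at most the number of monomials. -/
lemma rank_eval_le {N : ℕ} {σ τ : Type*} [Fintype σ] [Fintype τ]
    (q : MvPolynomial (σ ⊕ τ) ℝ) (u : Fin N → σ → ℝ) (v : Fin N → τ → ℝ) :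
    (Matrix.of fun x y : Fin N =>
      MvPolynomial.eval (Sum.elim (u x) (v y)) q).rank ≤ q.support.card := by
  classical
  have key : (Matrix.of fun x y : Fin N => MvPolynomial.eval (Sum.elim (u x) (v y)) q)
      = ∑ d ∈ q.support, Matrix.vecMulVec
          (fun x => coeff d q *
            ∏ i ∈ d.support.filter (fun i => i.isLeft),
              Sum.elim (u x) (fun _ => (0:ℝ)) i ^ d i)
          (fun y => ∏ i ∈ d.support.filter (fun i => ¬ i.isLeft),
            Sum.elim (fun _ => (0:ℝ)) (v y) i ^ d i) := by
    ext x y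
    rw [Matrix.sum_apply]
    simp only [Matrix.of_apply]
    rw [MvPolynomial.eval_eq]
    refine Finset.sum_congr rfl fun d _ => ?_
    rw [Matrix.vecMulVec_apply]
    rw [mul_assoc]
    congr 1
    rw [← Finset.prod_filter_mul_prod_filter_not d.support (fun i => i.isLeft)]
    congr 1
    · refine Finset.prod_congr rfl fun i hi => ?_
      rcases i with i | i
      · rfl
      · simp at hi
    · refine Finset.prod_congr rfl fun i hi => ?_
      rcases i with i | i
      · simp at hi
      · rfl
  rw [key]
  refine le_trans (rank_sum_le _ _) ?_
  calc ∑ d ∈ q.support, (Matrix.vecMulVec _ _).rank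
      ≤ ∑ _d ∈ q.support, 1 := Finset.sum_le_sum fun d _ => rank_vecMulVec_le _ _
    _ = q.support.card := by simp

lemma exists_UV_single {a b k r : ℕ} (M : Matrix (Fin a) (Fin b) ℝ)
    (hr : r ≤ M.rank) (hk : r ≤ k) :
    ∃ (U : Matrix (Fin a) (Fin k) ℝ) (V : Matrix (Fin b) (Fin k) ℝ),
      r ≤ (Uᵀ * M * V).rank := by
  rcases Nat.eq_zero_or_pos r with h0 | hpos
  · exact ⟨0, 0, by omega⟩
  obtain ⟨f, g, hfg⟩ := exists_minor M hr
  set f' : Fin k → Fin a := fun j => if h : (j : ℕ) < r then f ⟨j, h⟩ else f ⟨0, hpos⟩ with hf'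
  set g' : Fin k → Fin b := fun j => if h : (j : ℕ) < r then g ⟨j, h⟩ else g ⟨0, hpos⟩ with hg'
  refine ⟨(1 : Matrix (Fin a) (Fin a) ℝ).submatrix id f',
          (1 : Matrix (Fin b) (Fin b) ℝ).submatrix id g', ?_⟩
  have ht : ((1 : Matrix (Fin a) (Fin a) ℝ).submatrix id f')ᵀ
      = (1 : Matrix (Fin a) (Fin a) ℝ).submatrix f' id := by
    rw [Matrix.transpose_submatrix, Matrix.transpose_one]
  rw [ht, one_sub_mul, mul_one_sub]
  have hsub : (M.submatrix f' id).submatrix id g' = M.submatrix f' g' := by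
    rw [Matrix.submatrix_submatrix]; rfl
  rw [hsub]
  refine rank_ge_of_minor _ (Fin.castLE hk) (Fin.castLE hk) ?_
  have hfc : f' ∘ Fin.castLE hk = f := by
    funext j
    simp only [Function.comp_apply, hf', Fin.coe_castLE, j.isLt, dif_pos, Fin.eta]
  have hgc : g' ∘ Fin.castLE hk = g := by
    funext j
    simp only [Function.comp_apply, hg', Fin.coe_castLE, j.isLt, dif_pos, Fin.eta]
  rw [Matrix.submatrix_submatrix, hfc, hgc]
  exact hfg

/-- evaluation of the symbolic matrix -/
lemma eval_symb {a b k : ℕ} (M : Matrix (Fin a) (Fin b) ℝ)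
    (e : ((Fin a × Fin k) ⊕ (Fin b × Fin k)) → ℝ) :
    ((Matrix.of fun i j => X (Sum.inl (i,j)) :
        Matrix (Fin a) (Fin k) (MvPolynomial ((Fin a × Fin k) ⊕ (Fin b × Fin k)) ℝ))ᵀ *
      (M.map MvPolynomial.C : Matrix (Fin a) (Fin b) (MvPolynomial ((Fin a × Fin k) ⊕ (Fin b × Fin k)) ℝ)) *
      (Matrix.of fun i j => X (Sum.inr (i,j)) :
        Matrix (Fin b) (Fin k) (MvPolynomial ((Fin a × Fin k) ⊕ (Fin b × Fin k)) ℝ))).map (eval e)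
    = (Matrix.of fun p q => e (Sum.inl (p,q)))ᵀ * M *
        (Matrix.of fun p q => e (Sum.inr (p,q))) := by
  rw [Matrix.map_mul (f := (eval e : MvPolynomial _ ℝ →+* ℝ)),
      Matrix.map_mul (f := (eval e : MvPolynomial _ ℝ →+* ℝ))]
  congr 1
  · congr 1
    · rw [Matrix.transpose_map]
      congr 1
      ext i j
      simp
    · ext i j
      simp
  · ext i j
    simp

/-- simultaneous dimension reduction of a finite family of matrices -/
lemma dim_reduce {a b k : ℕ} {ι : Type*} [Fintype ι] (M : ι → Matrix (Fin a) (Fin b) ℝ) :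
    ∃ (U : Matrix (Fin a) (Fin k) ℝ) (V : Matrix (Fin b) (Fin k) ℝ),
      ∀ i, (Uᵀ * M i * V).rank = min (M i).rank k := by
  classical
  set PU : Matrix (Fin a) (Fin k) (MvPolynomial ((Fin a × Fin k) ⊕ (Fin b × Fin k)) ℝ) :=
    Matrix.of fun i j => X (Sum.inl (i,j)) with hPU
  set PV : Matrix (Fin b) (Fin k) (MvPolynomial ((Fin a × Fin k) ⊕ (Fin b × Fin k)) ℝ) :=
    Matrix.of fun i j => X (Sum.inr (i,j)) with hPV
  set Q : ι → MvPolynomial ((Fin a × Fin k) ⊕ (Fin b × Fin k)) ℝ := fun i =>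
    ∑ f : Fin (min (M i).rank k) → Fin k, ∑ g : Fin (min (M i).rank k) → Fin k,
      ((PUᵀ * ((M i).map MvPolynomial.C : Matrix (Fin a) (Fin b) (MvPolynomial ((Fin a × Fin k) ⊕ (Fin b × Fin k)) ℝ)) * PV).submatrix f g).det ^ 2 with hQ
  have heval : ∀ (e : ((Fin a × Fin k) ⊕ (Fin b × Fin k)) → ℝ) i,
      eval e (Q i) = ∑ f : Fin (min (M i).rank k) → Fin k,
        ∑ g : Fin (min (M i).rank k) → Fin k,
        (((Matrix.of fun p q => e (Sum.inl (p,q)))ᵀ * M i *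
           (Matrix.of fun p q => e (Sum.inr (p,q)))).submatrix f g).det ^ 2 := by
    intro e i
    rw [hQ]
    simp only [map_sum, map_pow]
    refine Finset.sum_congr rfl fun f _ => Finset.sum_congr rfl fun g _ => ?_
    congr 1
    rw [RingHom.map_det, RingHom.mapMatrix_apply]
    congr 1
    rw [← Matrix.submatrix_map, eval_symb]
  have hQne : ∀ i, Q i ≠ 0 := by
    intro i
    obtain ⟨U, V, hUV⟩ := exists_UV_single (M i) (min_le_left _ _) (min_le_right _ _)
    obtain ⟨f, g, hfg⟩ := exists_minor _ hUV
    set e : ((Fin a × Fin k) ⊕ (Fin b × Fin k)) → ℝ :=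
      Sum.elim (fun p => U p.1 p.2) (fun p => V p.1 p.2) with he
    intro hzero
    have h1 : eval e (Q i) = 0 := by rw [hzero]; simp
    rw [heval] at h1
    have hU : (Matrix.of fun p q => e (Sum.inl (p,q))) = U := by ext p q; rfl
    have hV : (Matrix.of fun p q => e (Sum.inr (p,q))) = V := by ext p q; rfl
    rw [hU, hV] at h1
    have hpos : 0 < ∑ f : Fin (min (M i).rank k) → Fin k,
        ∑ g : Fin (min (M i).rank k) → Fin k,
        (((Uᵀ * M i * V).submatrix f g).det) ^ 2 := by
      refine Finset.sum_pos' (fun f _ => Finset.sum_nonneg fun g _ => sq_nonneg _) ?_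
      refine ⟨f, Finset.mem_univ _, ?_⟩
      refine Finset.sum_pos' (fun g _ => sq_nonneg _) ⟨g, Finset.mem_univ _, ?_⟩
      exact lt_of_le_of_ne (sq_nonneg _) (Ne.symm (pow_ne_zero 2 hfg))
    rw [h1] at hpos
    exact lt_irrefl 0 hpos
  have hprod : (∏ i : ι, Q i) ≠ 0 := Finset.prod_ne_zero_iff.2 fun i _ => hQne i
  have hexists : ∃ e : ((Fin a × Fin k) ⊕ (Fin b × Fin k)) → ℝ,
      eval e (∏ i : ι, Q i) ≠ 0 := by
    by_contra h
    push_neg at h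
    exact hprod (MvPolynomial.funext fun e => by rw [h e]; simp)
  obtain ⟨e, he⟩ := hexists
  refine ⟨Matrix.of fun p q => e (Sum.inl (p,q)), Matrix.of fun p q => e (Sum.inr (p,q)), ?_⟩
  intro i
  have hei : eval e (Q i) ≠ 0 := by
    intro h0
    apply he
    rw [map_prod]
    exact Finset.prod_eq_zero (Finset.mem_univ i) h0
  rw [heval] at hei
  have hex : ∃ (f : Fin (min (M i).rank k) → Fin k) (g : Fin (min (M i).rank k) → Fin k),
      (((Matrix.of fun p q => e (Sum.inl (p,q)))ᵀ * M i *
        (Matrix.of fun p q => e (Sum.inr (p,q)))).submatrix f g).det ≠ 0 := by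
    by_contra h
    push_neg at h
    apply hei
    refine Finset.sum_eq_zero fun f _ => Finset.sum_eq_zero fun g _ => ?_
    rw [h f g]; ring
  obtain ⟨f, g, hfg⟩ := hex
  have hge := rank_ge_of_minor _ f g hfg
  have hle : ((Matrix.of fun p q => e (Sum.inl (p,q)))ᵀ * M i *
      (Matrix.of fun p q => e (Sum.inr (p,q)))).rank ≤ min (M i).rank k := by
    refine le_min ?_ ?_
    · exact le_trans (Matrix.rank_mul_le_left _ _) (Matrix.rank_mul_le_right _ _)
    · simpa using Matrix.rank_le_card_width
        ((Matrix.of fun p q => e (Sum.inl (p,q)))ᵀ * M i *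
          (Matrix.of fun p q => e (Sum.inr (p,q))))
  omega

/-- the fixed polynomial whose evaluations detect `t ≤ rank (u + v)` for k×k matrices -/
def polyP (k t : ℕ) : MvPolynomial ((Fin k × Fin k) ⊕ (Fin k × Fin k)) ℝ :=
  ∑ f : Fin t → Fin k, ∑ g : Fin t → Fin k,
    (((Matrix.of fun i j => X (Sum.inl (i,j)) + X (Sum.inr (i,j)) :
      Matrix (Fin k) (Fin k) (MvPolynomial ((Fin k × Fin k) ⊕ (Fin k × Fin k)) ℝ))).submatrix
        f g).det ^ 2

lemma polyP_eval {k t : ℕ} (u v : Matrix (Fin k) (Fin k) ℝ) :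
    eval (Sum.elim (fun q : Fin k × Fin k => u q.1 q.2)
      (fun q : Fin k × Fin k => v q.1 q.2)) (polyP k t)
    = ∑ f : Fin t → Fin k, ∑ g : Fin t → Fin k, (((u + v).submatrix f g).det) ^ 2 := by
  rw [polyP]
  simp only [map_sum, map_pow]
  refine Finset.sum_congr rfl fun f _ => Finset.sum_congr rfl fun g _ => ?_
  congr 1
  rw [RingHom.map_det, RingHom.mapMatrix_apply]
  congr 1
  rw [← Matrix.submatrix_map]
  congr 1
  ext i j
  simp

lemma polyP_nonneg {k t : ℕ} (u v : Matrix (Fin k) (Fin k) ℝ) :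
    0 ≤ eval (Sum.elim (fun q : Fin k × Fin k => u q.1 q.2)
      (fun q : Fin k × Fin k => v q.1 q.2)) (polyP k t) := by
  rw [polyP_eval]
  exact Finset.sum_nonneg fun f _ => Finset.sum_nonneg fun g _ => sq_nonneg _

lemma polyP_pos_iff {k t : ℕ} (u v : Matrix (Fin k) (Fin k) ℝ) :
    0 < eval (Sum.elim (fun q : Fin k × Fin k => u q.1 q.2)
      (fun q : Fin k × Fin k => v q.1 q.2)) (polyP k t) ↔ t ≤ (u + v).rank := by
  rw [polyP_eval]
  constructor
  · intro hpos
    have hex : ∃ (f : Fin t → Fin k) (g : Fin t → Fin k),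
        (((u + v).submatrix f g).det) ≠ 0 := by
      by_contra h
      push_neg at h
      rw [Finset.sum_eq_zero fun f _ => Finset.sum_eq_zero fun g _ => by
        rw [h f g]; ring] at hpos
      exact lt_irrefl 0 hpos
    obtain ⟨f, g, hfg⟩ := hex
    exact rank_ge_of_minor _ f g hfg
  · intro hrk
    obtain ⟨f, g, hfg⟩ := exists_minor _ hrk
    refine Finset.sum_pos' (fun f _ => Finset.sum_nonneg fun g _ => sq_nonneg _) ?_
    refine ⟨f, Finset.mem_univ _, ?_⟩
    refine Finset.sum_pos' (fun g _ => sq_nonneg _) ⟨g, Finset.mem_univ _, ?_⟩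
    exact lt_of_le_of_ne (sq_nonneg _) (Ne.symm (pow_ne_zero 2 hfg))

end

end SRAux
set_option maxHeartbeats 2000000 in
theorem stmt11 :
    ∃ C : ℕ → ℕ, ∀ (k N a b : ℕ) (A B : Fin N → Matrix (Fin a) (Fin b) ℝ)
      (g : ℕ → Bool), (∀ m, k ≤ m → g m = g k) →
      ∀ P : Matrix (Fin N) (Fin N) Bool,
        (∀ x y, P x y = g ((A x + B y).rank)) →
        signrank P ≤ C k := by
  classical
  refine ⟨fun k => ∑ t ∈ Finset.range (k+1), (SRAux.polyP k t).support.card,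
    fun k N a b A B g hg P hP => ?_⟩
  obtain ⟨U, V, hUV⟩ := SRAux.dim_reduce (k := k)
    (fun z : Fin N × Fin N => A z.1 + B z.2)
  set u : Fin N → Matrix (Fin k) (Fin k) ℝ := fun x => Uᵀ * A x * V with hu
  set v : Fin N → Matrix (Fin k) (Fin k) ℝ := fun y => Uᵀ * B y * V with hv
  have hWsum : ∀ x y, u x + v y = Uᵀ * (A x + B y) * V := by
    intro x y
    rw [hu, hv]
    simp only
    rw [Matrix.mul_add, Matrix.add_mul]
  set ρ : Fin N → Fin N → ℕ := fun x y => min ((A x + B y).rank) k with hρ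
  have hρdef : ∀ x y, ρ x y = min ((A x + B y).rank) k := fun x y => rfl
  have hrank : ∀ x y, (u x + v y).rank = ρ x y := by
    intro x y
    rw [hWsum]
    exact hUV (x, y)
  set p : ℕ → Fin N → Fin N → ℝ := fun t x y =>
    MvPolynomial.eval (Sum.elim (fun q : Fin k × Fin k => u x q.1 q.2)
      (fun q : Fin k × Fin k => v y q.1 q.2)) (SRAux.polyP k t) with hp
  have hpnn : ∀ t x y, 0 ≤ p t x y := fun t x y => SRAux.polyP_nonneg _ _
  have hppos : ∀ t x y, 0 < p t x y ↔ t ≤ ρ x y := by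
    intro t x y
    rw [hp]
    simp only
    rw [SRAux.polyP_pos_iff, hrank]
  have hpzero : ∀ t x y, ρ x y < t → p t x y = 0 := by
    intro t x y h
    by_contra hne
    have hpos := lt_of_le_of_ne (hpnn t x y) (Ne.symm hne)
    have := (hppos t x y).1 hpos
    omega
  set T : ℝ := 1 + ∑ t ∈ Finset.range (k+1), ∑ x : Fin N, ∑ y : Fin N, p t x y with hT
  have hT1 : 1 ≤ T := by
    rw [hT]
    have h0 : 0 ≤ ∑ t ∈ Finset.range (k+1), ∑ x : Fin N, ∑ y : Fin N, p t x y :=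
      Finset.sum_nonneg fun t _ => Finset.sum_nonneg fun x _ =>
        Finset.sum_nonneg fun y _ => hpnn t x y
    linarith
  have hpT : ∀ t, t ∈ Finset.range (k+1) → ∀ x y, p t x y ≤ T := by
    intro t ht x y
    have h1 : p t x y ≤ ∑ y : Fin N, p t x y :=
      Finset.single_le_sum (fun y _ => hpnn t x y) (Finset.mem_univ y)
    have h2 : ∑ y' : Fin N, p t x y' ≤ ∑ x : Fin N, ∑ y : Fin N, p t x y :=
      Finset.single_le_sum (f := fun x => ∑ y : Fin N, p t x y)
        (fun x _ => Finset.sum_nonneg fun y _ => hpnn t x y) (Finset.mem_univ x)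
    have h3 : ∑ x : Fin N, ∑ y : Fin N, p t x y
        ≤ ∑ t ∈ Finset.range (k+1), ∑ x : Fin N, ∑ y : Fin N, p t x y :=
      Finset.single_le_sum (f := fun t => ∑ x : Fin N, ∑ y : Fin N, p t x y)
        (fun t _ => Finset.sum_nonneg fun x _ => Finset.sum_nonneg fun y _ => hpnn t x y) ht
    rw [hT]; linarith
  set G : Finset ℝ := Finset.image
      (fun z : Fin (k+1) × Fin N × Fin N => p z.1 z.2.1 z.2.2)
      (Finset.univ.filter fun z : Fin (k+1) × Fin N × Fin N => 0 < p z.1 z.2.1 z.2.2) with hG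
  set m : ℝ := if h : G.Nonempty then G.min' h else 1 with hm
  have hm0 : 0 < m := by
    rw [hm]
    split_ifs with h
    · obtain ⟨z, hz1, hz2⟩ := Finset.mem_image.1 (G.min'_mem h)
      rw [Finset.mem_filter] at hz1
      rw [← hz2]
      exact hz1.2
    · norm_num
  have hmle : ∀ t x y, t ≤ k → 0 < p t x y → m ≤ p t x y := by
    intro t x y htk hpos
    have hmem : p t x y ∈ G := by
      rw [hG]
      refine Finset.mem_image.2 ⟨(⟨t, by omega⟩, x, y), ?_, rfl⟩
      simp only [Finset.mem_filter, Finset.mem_univ, true_and]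
      exact hpos
    rw [hm, dif_pos ⟨_, hmem⟩]
    exact G.min'_le _ hmem
  have hmT : m ≤ T := by
    rw [hm]
    split_ifs with h
    · obtain ⟨z, hz1, hz2⟩ := Finset.mem_image.1 (G.min'_mem h)
      rw [← hz2]
      exact hpT z.1 (by simp only [Finset.mem_range]; exact z.1.isLt) z.2.1 z.2.2
    · exact hT1
  set β : ℝ := 2 * (k+1) * T / m with hβ
  have hβpos : 0 < β := by
    rw [hβ]
    have hk1 : (0:ℝ) < 2 * (k+1) * T := by positivity
    exact div_pos hk1 hm0
  have hβ1 : 1 ≤ β := by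
    rw [hβ, le_div_iff₀ hm0]
    have hk0 : (0:ℝ) ≤ (k:ℝ) := Nat.cast_nonneg k
    nlinarith [hmT, hT1]
  have hmβ : m * β = 2 * (k+1) * T := by
    rw [hβ]
    field_simp
  have key : ∀ r, r ≤ k → (∑ t ∈ Finset.range r, β ^ t * T) < β ^ r * m := by
    intro r hrk
    rcases Nat.eq_zero_or_pos r with h0 | hposr
    · subst h0
      simpa using hm0
    obtain ⟨s, rfl⟩ := Nat.exists_eq_succ_of_ne_zero (Nat.pos_iff_ne_zero.1 hposr)
    show (∑ t ∈ Finset.range (s+1), β ^ t * T) < β ^ (s+1) * m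
    have hb : ∀ t ∈ Finset.range (s+1), β ^ t * T ≤ β ^ s * T := by
      intro t ht
      have hpw : β ^ t ≤ β ^ s :=
        pow_le_pow_right₀ hβ1 (by simp only [Finset.mem_range] at ht; omega)
      nlinarith [hT1]
    have hsum : (∑ t ∈ Finset.range (s+1), β ^ t * T) ≤ (s+1 : ℝ) * (β ^ s * T) := by
      have := Finset.sum_le_card_nsmul (Finset.range (s+1)) (fun t => β ^ t * T) (β ^ s * T) hb
      simpa [mul_comm] using this
    have hlast : (s+1 : ℝ) * (β ^ s * T) < β ^ (s+1) * m := by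
      have hβs : 0 < β ^ s := pow_pos hβpos s
      have h1 : β ^ (s+1) * m = (β ^ s) * (m * β) := by ring
      rw [h1, hmβ]
      have h2 : (s:ℝ) + 1 ≤ (k:ℝ) + 1 := by
        have : (s:ℝ) ≤ (k:ℝ) := by exact_mod_cast (by omega : s ≤ k)
        linarith
      have hTpos : (0:ℝ) < T := lt_of_lt_of_le one_pos hT1
      have e1 : ((s:ℝ)+1) * (β ^ s * T) ≤ ((k:ℝ)+1) * (β ^ s * T) :=
        mul_le_mul_of_nonneg_right h2 (by positivity)
      have e3 : β ^ s * (2 * ((k:ℝ)+1) * T) = 2 * (((k:ℝ)+1) * (β ^ s * T)) := by ring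
      have hx : (0:ℝ) < ((k:ℝ)+1) * (β ^ s * T) := by positivity
      linarith
    linarith
  set sg : ℕ → ℝ := fun t => if g t then 1 else -1 with hsg
  set R : Matrix (Fin N) (Fin N) ℝ :=
    Matrix.of fun x y => ∑ t ∈ Finset.range (k+1), sg t * β ^ t * p t x y with hR
  have hsign : ∀ x y, (P x y = true → 0 < R x y) ∧ (P x y = false → R x y < 0) := by
    intro x y
    have hrk : ρ x y ≤ k := by rw [hρdef]; exact min_le_right _ _
    set r : ℕ := ρ x y with hr
    have hgr : g ((A x + B y).rank) = g r := by
      rcases le_or_gt ((A x + B y).rank) k with hle | hlt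
      · rw [hr, hρdef, min_eq_left hle]
      · have h1 : r = k := by rw [hr, hρdef, min_eq_right (le_of_lt hlt)]
        rw [h1, hg _ (le_of_lt hlt)]
    have hRxy : R x y = (∑ t ∈ Finset.range r, sg t * β ^ t * p t x y)
        + sg r * β ^ r * p r x y := by
      rw [hR]
      simp only [Matrix.of_apply]
      rw [← Finset.sum_range_succ]
      refine (Finset.sum_subset (Finset.range_subset_range.2 (by omega)) ?_).symm
      intro t ht hnt
      simp only [Finset.mem_range] at ht hnt
      rw [hpzero t x y (by omega)]
      ring
    have hprpos : 0 < p r x y := (hppos r x y).2 (le_of_eq hr)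
    have hpm : m ≤ p r x y := hmle r x y hrk hprpos
    have habs : |∑ t ∈ Finset.range r, sg t * β ^ t * p t x y|
        ≤ ∑ t ∈ Finset.range r, β ^ t * T := by
      refine le_trans (Finset.abs_sum_le_sum_abs _ _) (Finset.sum_le_sum ?_)
      intro t ht
      have h1 : |sg t * β ^ t * p t x y| = β ^ t * p t x y := by
        rw [abs_mul, abs_mul, hsg]
        have hone : |if g t then (1:ℝ) else -1| = 1 := by split_ifs <;> norm_num
        rw [hone, one_mul, abs_of_nonneg (le_of_lt (pow_pos hβpos t)),
          abs_of_nonneg (hpnn t x y)]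
      rw [h1]
      have h2 : p t x y ≤ T := by
        refine hpT t ?_ x y
        simp only [Finset.mem_range] at ht ⊢
        omega
      nlinarith [pow_pos hβpos t]
    have hEb : |∑ t ∈ Finset.range r, sg t * β ^ t * p t x y| < β ^ r * p r x y := by
      calc |∑ t ∈ Finset.range r, sg t * β ^ t * p t x y|
          ≤ ∑ t ∈ Finset.range r, β ^ t * T := habs
        _ < β ^ r * m := key r hrk
        _ ≤ β ^ r * p r x y := by nlinarith [pow_pos hβpos r]
    constructor
    · intro hPt
      have hgt : g r = true := by rw [hP x y, hgr] at hPt; exact hPt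
      have hsgr : sg r = 1 := by rw [hsg]; simp [hgt]
      rw [hRxy, hsgr, one_mul]
      have hna := neg_abs_le (∑ t ∈ Finset.range r, sg t * β ^ t * p t x y)
      linarith [hEb]
    · intro hPf
      have hgt : g r = false := by rw [hP x y, hgr] at hPf; exact hPf
      have hsgr : sg r = -1 := by rw [hsg]; simp [hgt]
      rw [hRxy, hsgr]
      have hsa := le_abs_self (∑ t ∈ Finset.range r, sg t * β ^ t * p t x y)
      have h2 : (-1) * β ^ r * p r x y = -(β ^ r * p r x y) := by ring
      linarith [hEb]
  have hrankR : R.rank ≤ ∑ t ∈ Finset.range (k+1), (SRAux.polyP k t).support.card := by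
    have hdecomp : R = ∑ t ∈ Finset.range (k+1),
        Matrix.of (fun x y : Fin N =>
          MvPolynomial.eval (Sum.elim (fun q : Fin k × Fin k => u x q.1 q.2)
            (fun q : Fin k × Fin k => v y q.1 q.2)) ((sg t * β ^ t) • SRAux.polyP k t)) := by
      ext x y
      simp only [hR, Matrix.sum_apply, Matrix.of_apply]
      refine Finset.sum_congr rfl fun t _ => ?_
      rw [MvPolynomial.smul_eval, hp]
    rw [hdecomp]
    refine le_trans (SRAux.rank_sum_le _ _) (Finset.sum_le_sum fun t _ => ?_)
    refine le_trans (SRAux.rank_eval_le _ _ _) ?_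
    exact Finset.card_le_card MvPolynomial.support_smul
  refine le_trans (Nat.sInf_le ?_) hrankR
  exact ⟨R, rfl, hsign⟩
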